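/- arXiv:2403.04841 — 4 statements merged into one kernel-verified Lean document; each statement's English description precedes it below -/
import Mathlib

section
/- Let n, q, m be natural numbers with q ≤ n. For each i ∈ Fin m, let C_i ⊆ Fin n be a set of at most q qubits, let h_i be a PSD complex matrix indexed by (C_i → Fin 2), and let H_i be the (Fin n → Fin 2)-indexed matrix that is C_i-local with local part h_i. If Σ_{i ∈ Fin m} H_i ≼ I (the identity on ℂ^{2^n}), then Σ_{i ∈ Fin m} trace(h_i) ≤ 2^q, and consequently Σ_{i ∈ Fin m} ‖H_i‖ ≤ 2^q. -/
open Matrix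
open scoped Matrix.Norms.L2Operator ComplexOrder

/-- `H` is `S`-local with local part `h`: under the canonical bijection
`(Fin n → Fin 2) ≃ (S → Fin 2) × (Sᶜ → Fin 2)`, `H` corresponds to `h ⊗ₖ I`.
Entrywise: `H x y = h (x|_S) (y|_S)` if `x` and `y` agree outside `S`, and `0` otherwise. -/
def Matrix.IsLocalOn {n : ℕ} (S : Finset (Fin n))
    (h : Matrix ({i // i ∈ S} → Fin 2) ({i // i ∈ S} → Fin 2) ℂ)
    (H : Matrix (Fin n → Fin 2) (Fin n → Fin 2) ℂ) : Prop :=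
  ∀ x y : Fin n → Fin 2,
    H x y = h (fun i => x i.1) (fun i => y i.1) *
      (if ∀ i ∉ S, x i = y i then 1 else 0)

set_option linter.unusedSectionVars false

variable {α β : Type*} [Fintype α] [DecidableEq α] [Fintype β] [DecidableEq β]

lemma star_dot_self (w : α → ℂ) :
    star w ⬝ᵥ w = ((∑ i, ‖w i‖ ^ 2 : ℝ) : ℂ) := by
  push_cast
  unfold dotProduct
  refine Finset.sum_congr rfl fun i _ => ?_
  rw [Pi.star_apply, Complex.star_def, mul_comm, Complex.mul_conj']

lemma psd_trace_real {A : Matrix α α ℂ} (hA : A.PosSemidef) :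
    A.trace = ((A.trace).re : ℂ) ∧ 0 ≤ (A.trace).re := by
  have h0 : (0 : ℂ) ≤ A.trace := by
    unfold Matrix.trace
    refine Finset.sum_nonneg fun j _ => ?_
    have := hA.dotProduct_mulVec_nonneg (Pi.single j 1)
    simpa [dotProduct, Pi.single_apply, Matrix.mulVec, Finset.sum_ite_eq] using this
  rw [Complex.le_def] at h0
  refine ⟨?_, h0.1⟩
  rw [Complex.ext_iff]
  exact ⟨by simp, by simpa using h0.2.symm⟩

lemma smul_one_sub_psd {A : Matrix α α ℂ} (hA : A.PosSemidef) :
    ((A.trace) • (1 : Matrix α α ℂ) - A).PosSemidef := by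
  classical
  set U : Matrix α α ℂ := (hA.1.eigenvectorUnitary : Matrix α α ℂ) with hUdef
  have hU1 : U * star U = 1 := Matrix.mem_unitaryGroup_iff.mp hA.1.eigenvectorUnitary.2
  have htr : A.trace = ((∑ i, hA.1.eigenvalues i : ℝ) : ℂ) := by
    conv_lhs => rw [hA.1.spectral_theorem, Unitary.conjStarAlgAut_apply]
    rw [Matrix.trace_mul_cycle]
    rw [show (star U) * U = 1 from Matrix.mem_unitaryGroup_iff'.mp hA.1.eigenvectorUnitary.2]
    rw [one_mul, Matrix.trace_diagonal]
    push_cast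
    rfl
  have hdiagpsd : (Matrix.diagonal (fun i => A.trace - (hA.1.eigenvalues i : ℂ))).PosSemidef := by
    refine Matrix.PosSemidef.diagonal fun i => ?_
    simp only [Pi.zero_apply]
    rw [htr]
    have h1 : hA.1.eigenvalues i ≤ ∑ j, hA.1.eigenvalues j :=
      Finset.single_le_sum (fun j _ => hA.eigenvalues_nonneg j) (Finset.mem_univ i)
    have h2 : (0:ℝ) ≤ (∑ j, hA.1.eigenvalues j) - hA.1.eigenvalues i := by linarith
    calc (0:ℂ) ≤ (((∑ j, hA.1.eigenvalues j) - hA.1.eigenvalues i : ℝ) : ℂ) := by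
          exact_mod_cast h2
      _ = _ := by push_cast; ring
  have key : (A.trace) • (1 : Matrix α α ℂ) - A
      = U * (Matrix.diagonal (fun i => A.trace - (hA.1.eigenvalues i : ℂ))) * star U := by
    have hd : Matrix.diagonal (fun i => A.trace - (hA.1.eigenvalues i : ℂ))
        = A.trace • (1 : Matrix α α ℂ) - Matrix.diagonal (RCLike.ofReal ∘ hA.1.eigenvalues) := by
      ext i j
      rcases eq_or_ne i j with rfl | hij
      · simp [Matrix.diagonal_apply_eq, Matrix.one_apply_eq, Function.comp]
      · simp [Matrix.diagonal_apply_ne _ hij, Matrix.one_apply_ne hij]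
    rw [hd, Matrix.mul_sub, Matrix.sub_mul, Matrix.mul_smul, Matrix.smul_mul, mul_one, hU1]
    congr 1
    exact hA.1.spectral_theorem
  rw [key]
  simpa [Matrix.star_eq_conjTranspose] using hdiagpsd.mul_mul_conjTranspose_same U

open scoped MatrixOrder in
lemma psd_norm_le {A : Matrix α α ℂ} (hA : A.PosSemidef) {c : ℝ} (hc : 0 ≤ c)
    (hcA : ((c : ℂ) • (1 : Matrix α α ℂ) - A).PosSemidef) : ‖A‖ ≤ c := by
  have hc' : (0 : ℂ) ≤ (c : ℂ) := by exact_mod_cast hc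
  rw [Matrix.cstar_norm_def]
  refine ContinuousLinearMap.opNorm_le_bound _ hc fun x => ?_
  set v : α → ℂ := (WithLp.equiv 2 (α → ℂ)) x with hv
  have hx : x = (WithLp.equiv 2 (α → ℂ)).symm v := by simp [hv]
  rw [hx]
  change ‖(WithLp.equiv 2 (α → ℂ)).symm (A *ᵥ v)‖ ≤ c * ‖(WithLp.equiv 2 (α → ℂ)).symm v‖
  have normsq : ∀ w : α → ℂ,
      ‖(WithLp.equiv 2 (α → ℂ)).symm w‖ = Real.sqrt (∑ i, ‖w i‖ ^ 2) := by
    intro w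
    rw [EuclideanSpace.norm_eq]
    congr 1
  -- PSD of c•A - A*A
  set B := CFC.sqrt A with hBdef
  have hBH : Bᴴ = B := (CFC.sqrt_nonneg A).posSemidef.1
  have hBB : B * B = A := CFC.sqrt_mul_sqrt_self A hA.nonneg
  have hBAB : B * A * B = A * A := by
    rw [← hBB]; simp only [← mul_assoc]
  have h3 : ((c : ℂ) • A - A * A).PosSemidef := by
    have hthis := hcA.conjTranspose_mul_mul_same B
    have heq : Bᴴ * ((c : ℂ) • (1 : Matrix α α ℂ) - A) * B = (c : ℂ) • A - A * A := by
      rw [hBH, Matrix.mul_sub, Matrix.sub_mul, Matrix.mul_smul, mul_one, Matrix.smul_mul,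
        hBB, hBAB]
    rwa [heq] at hthis
  -- quadratic form inequalities
  have h2 : star v ⬝ᵥ (A *ᵥ v) ≤ (c : ℂ) * (star v ⬝ᵥ v) := by
    have := hcA.dotProduct_mulVec_nonneg v
    rw [Matrix.sub_mulVec, Matrix.smul_mulVec, Matrix.one_mulVec, dotProduct_sub,
      dotProduct_smul, smul_eq_mul, sub_nonneg] at this
    exact this
  have h4 : star v ⬝ᵥ ((A * A) *ᵥ v) ≤ (c : ℂ) * (star v ⬝ᵥ (A *ᵥ v)) := by
    have := h3.dotProduct_mulVec_nonneg v
    rw [Matrix.sub_mulVec, Matrix.smul_mulVec, dotProduct_sub,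
      dotProduct_smul, smul_eq_mul, sub_nonneg] at this
    exact this
  have h5 : star v ⬝ᵥ ((A * A) *ᵥ v) ≤ (c : ℂ) * ((c : ℂ) * (star v ⬝ᵥ v)) :=
    h4.trans (mul_le_mul_of_nonneg_left h2 hc')
  have hQ2 : star v ⬝ᵥ ((A * A) *ᵥ v) = ((∑ i, ‖(A *ᵥ v) i‖ ^ 2 : ℝ) : ℂ) := by
    rw [← star_dot_self (A *ᵥ v), Matrix.star_mulVec, ← Matrix.dotProduct_mulVec,
      Matrix.mulVec_mulVec, hA.1]
  have hQ0 : star v ⬝ᵥ v = ((∑ i, ‖v i‖ ^ 2 : ℝ) : ℂ) := star_dot_self v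
  rw [hQ2, hQ0] at h5
  have hreal : (∑ i, ‖(A *ᵥ v) i‖ ^ 2 : ℝ) ≤ c * (c * ∑ i, ‖v i‖ ^ 2) := by
    have : (((∑ i, ‖(A *ᵥ v) i‖ ^ 2 : ℝ)) : ℂ) ≤ ((c * (c * ∑ i, ‖v i‖ ^ 2) : ℝ) : ℂ) := by
      convert h5 using 2 <;> push_cast <;> ring
    exact_mod_cast this
  rw [normsq, normsq]
  calc Real.sqrt (∑ i, ‖(A *ᵥ v) i‖ ^ 2) ≤ Real.sqrt (c * (c * ∑ i, ‖v i‖ ^ 2)) :=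
        Real.sqrt_le_sqrt hreal
    _ = c * Real.sqrt (∑ i, ‖v i‖ ^ 2) := by
        rw [← mul_assoc, ← pow_two, Real.sqrt_mul (by positivity), Real.sqrt_sq hc]

open scoped MatrixOrder in
lemma kronecker_one_psd {h : Matrix α α ℂ} (hh : h.PosSemidef) :
    (Matrix.kroneckerMap (· * ·) h (1 : Matrix β β ℂ)).PosSemidef := by
  obtain ⟨B, rfl⟩ := CStarAlgebra.nonneg_iff_eq_star_mul_self.mp hh.nonneg
  simp only [Matrix.star_eq_conjTranspose]
  have h1 : (Matrix.kroneckerMap (· * ·) B (1 : Matrix β β ℂ))ᴴ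
      = Matrix.kroneckerMap (· * ·) Bᴴ (1 : Matrix β β ℂ) := by
    ext ⟨a, b⟩ ⟨c, d⟩
    simp only [Matrix.conjTranspose_apply, Matrix.kroneckerMap_apply, Matrix.one_apply]
    by_cases hbd : b = d
    · subst hbd; simp
    · simp [hbd, Ne.symm hbd]
  have h2 : Matrix.kroneckerMap (· * ·) (Bᴴ * B) (1 : Matrix β β ℂ)
      = (Matrix.kroneckerMap (· * ·) B (1 : Matrix β β ℂ))ᴴ
        * Matrix.kroneckerMap (· * ·) B (1 : Matrix β β ℂ) := by
    rw [h1, ← Matrix.mul_kronecker_mul, one_mul]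
  rw [h2]
  exact Matrix.posSemidef_conjTranspose_mul_self _

lemma isLocalOn_rep {n : ℕ} {S : Finset (Fin n)}
    {h : Matrix ({i // i ∈ S} → Fin 2) ({i // i ∈ S} → Fin 2) ℂ}
    {H : Matrix (Fin n → Fin 2) (Fin n → Fin 2) ℂ} (hloc : Matrix.IsLocalOn S h H) :
    H = (Matrix.kroneckerMap (· * ·) h
        (1 : Matrix ({i // ¬ i ∈ S} → Fin 2) ({i // ¬ i ∈ S} → Fin 2) ℂ)).submatrix
      (fun x => (fun i => x i.1, fun i => x i.1)) (fun x => (fun i => x i.1, fun i => x i.1)) := by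
  ext x y
  rw [hloc x y]
  simp only [Matrix.submatrix_apply, Matrix.kroneckerMap_apply, Matrix.one_apply]
  congr 1
  have : ((fun (i : {i // ¬ i ∈ S}) => x i.1) = fun i => y i.1) ↔ ∀ i ∉ S, x i = y i := by
    rw [funext_iff, Subtype.forall]
  by_cases hcond : ∀ i ∉ S, x i = y i
  · rw [if_pos hcond, if_pos (this.mpr hcond)]
  · rw [if_neg hcond, if_neg (fun hc => hcond (this.mp hc))]

lemma isLocalOn_psd {n : ℕ} {S : Finset (Fin n)}
    {h : Matrix ({i // i ∈ S} → Fin 2) ({i // i ∈ S} → Fin 2) ℂ}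
    {H : Matrix (Fin n → Fin 2) (Fin n → Fin 2) ℂ} (hloc : Matrix.IsLocalOn S h H)
    (hh : h.PosSemidef) : H.PosSemidef := by
  rw [isLocalOn_rep hloc]
  exact (kronecker_one_psd hh).submatrix _

lemma isLocalOn_smul_one_sub {n : ℕ} {S : Finset (Fin n)}
    {h : Matrix ({i // i ∈ S} → Fin 2) ({i // i ∈ S} → Fin 2) ℂ}
    {H : Matrix (Fin n → Fin 2) (Fin n → Fin 2) ℂ} (c : ℂ) (hloc : Matrix.IsLocalOn S h H) :
    Matrix.IsLocalOn S (c • 1 - h) (c • 1 - H) := by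
  intro x y
  have key : (1 : Matrix (Fin n → Fin 2) (Fin n → Fin 2) ℂ) x y
      = (1 : Matrix ({i // i ∈ S} → Fin 2) ({i // i ∈ S} → Fin 2) ℂ)
          (fun i => x i.1) (fun i => y i.1) * (if ∀ i ∉ S, x i = y i then 1 else 0) := by
    by_cases hxy : x = y
    · subst hxy
      simp [Matrix.one_apply]
    · rw [Matrix.one_apply_ne hxy]
      by_cases hs : (fun (i : {i // i ∈ S}) => x i.1) = fun i => y i.1
      · rw [hs, Matrix.one_apply_eq]
        rw [if_neg, mul_zero]
        intro hcond
        apply hxy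
        funext i
        by_cases hi : i ∈ S
        · exact congrFun hs ⟨i, hi⟩
        · exact hcond i hi
      · rw [Matrix.one_apply_ne hs, zero_mul]
  simp only [Matrix.sub_apply, Matrix.smul_apply, smul_eq_mul, hloc x y, key]
  ring

lemma isLocalOn_trace {n : ℕ} {S : Finset (Fin n)}
    {h : Matrix ({i // i ∈ S} → Fin 2) ({i // i ∈ S} → Fin 2) ℂ}
    {H : Matrix (Fin n → Fin 2) (Fin n → Fin 2) ℂ} (hloc : Matrix.IsLocalOn S h H) :
    H.trace = ((2 : ℂ) ^ (n - S.card)) * h.trace := by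
  have hcard : Fintype.card ({i // ¬ i ∈ S} → Fin 2) = 2 ^ (n - S.card) := by
    rw [Fintype.card_fun, Fintype.card_fin, Fintype.card_subtype_compl, Fintype.card_fin,
      Fintype.card_coe]
  have hH : H.trace = ∑ x : Fin n → Fin 2, h (fun i => x i.1) (fun i => x i.1) := by
    unfold Matrix.trace Matrix.diag
    refine Finset.sum_congr rfl fun x _ => ?_
    rw [hloc x x, if_pos (fun i (_ : i ∉ S) => rfl), mul_one]
  rw [hH]
  set e := (Equiv.piEquivPiSubtypeProd (fun i : Fin n => i ∈ S) (fun _ => Fin 2)).symm with he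
  rw [← Equiv.sum_comp e (fun x : Fin n → Fin 2 => h (fun i => x i.1) (fun i => x i.1))]
  have hfst : ∀ p : ({i // i ∈ S} → Fin 2) × ({i // ¬ i ∈ S} → Fin 2),
      (fun (i : {i // i ∈ S}) => (e p) i.1) = p.1 := by
    intro p
    funext i
    simp [he, Equiv.piEquivPiSubtypeProd, i.2]
  have : ∀ p : ({i // i ∈ S} → Fin 2) × ({i // ¬ i ∈ S} → Fin 2),
      h (fun i => (e p) i.1) (fun i => (e p) i.1) = h p.1 p.1 := by
    intro p; rw [hfst]
  rw [Finset.sum_congr rfl (fun p _ => this p)]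
  rw [Fintype.sum_prod_type_right]
  calc (∑ y : {x // x ∉ S} → Fin 2, ∑ x : {x // x ∈ S} → Fin 2, h (x, y).1 (x, y).1)
      = ∑ _y : {x // x ∉ S} → Fin 2, h.trace := Finset.sum_congr rfl (fun y _ => rfl)
    _ = (Fintype.card ({x // x ∉ S} → Fin 2) : ℂ) * h.trace := by
        rw [Finset.sum_const, nsmul_eq_mul]
        simp
    _ = ((2 : ℂ) ^ (n - S.card)) * h.trace := by
        rw [hcard]
        push_cast
        ring

/-- **Trace/norm bound for sums of local PSD terms dominated by the identity.**
If the `H_i` are `C_i`-local with PSD local parts `h_i`, `|C_i| ≤ q`, and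
`∑ H_i ≼ I` on `n` qubits, then `∑ tr(h_i) ≤ 2^q`, and consequently
`∑ ‖H_i‖ ≤ 2^q` in the ℓ²→ℓ² operator norm. -/
theorem sum_local_trace_le_of_sum_le_one
    (n q m : ℕ) (hqn : q ≤ n)
    (C : Fin m → Finset (Fin n))
    (hCcard : ∀ i, (C i).card ≤ q)
    (h : ∀ i : Fin m, Matrix ({j // j ∈ C i} → Fin 2) ({j // j ∈ C i} → Fin 2) ℂ)
    (hpsd : ∀ i, (h i).PosSemidef)
    (H : Fin m → Matrix (Fin n → Fin 2) (Fin n → Fin 2) ℂ)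
    (hlocal : ∀ i, Matrix.IsLocalOn (C i) (h i) (H i))
    (hle : ((1 : Matrix (Fin n → Fin 2) (Fin n → Fin 2) ℂ) - ∑ i, H i).PosSemidef) :
    (∑ i, ((h i).trace).re ≤ (2 : ℝ) ^ q) ∧ (∑ i, ‖H i‖ ≤ (2 : ℝ) ^ q) := by
  classical
  set t : Fin m → ℝ := fun i => ((h i).trace).re with ht
  have htr : ∀ i, (h i).trace = ((t i : ℝ) : ℂ) := fun i => (psd_trace_real (hpsd i)).1
  have htnn : ∀ i, 0 ≤ t i := fun i => (psd_trace_real (hpsd i)).2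
  have hcardX : (Fintype.card (Fin n → Fin 2)) = 2 ^ n := by simp
  have htraceH : ∀ i, (H i).trace = (((2:ℝ) ^ (n - (C i).card) * t i : ℝ) : ℂ) := by
    intro i; rw [isLocalOn_trace (hlocal i), htr i]; push_cast; ring
  have hmain : ∑ i, (2:ℝ) ^ (n - (C i).card) * t i ≤ (2:ℝ) ^ n := by
    have h0 := (psd_trace_real hle).2
    have hE : ((1 : Matrix (Fin n → Fin 2) (Fin n → Fin 2) ℂ) - ∑ i, H i).trace
        = (((2:ℝ)^n - ∑ i, (2:ℝ) ^ (n - (C i).card) * t i : ℝ) : ℂ) := by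
      rw [Matrix.trace_sub, Matrix.trace_sum, Matrix.trace_one,
        Finset.sum_congr rfl (fun i _ => htraceH i), hcardX]
      push_cast
      ring
    rw [hE] at h0
    rw [Complex.ofReal_re] at h0
    linarith
  have hsum_t : ∑ i, t i ≤ (2:ℝ)^q := by
    have hpos : (0:ℝ) < (2:ℝ)^(n-q) := by positivity
    rw [← mul_le_mul_iff_right₀ hpos]
    have hstep : (2:ℝ)^(n-q) * ∑ i, t i ≤ ∑ i, (2:ℝ)^(n - (C i).card) * t i := by
      rw [Finset.mul_sum]
      refine Finset.sum_le_sum fun i _ => ?_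
      refine mul_le_mul_of_nonneg_right ?_ (htnn i)
      exact pow_le_pow_right₀ one_le_two (Nat.sub_le_sub_left (hCcard i) n)
    have h2 : (2:ℝ)^(n-q) * (2:ℝ)^q = (2:ℝ)^n := by
      rw [← pow_add, Nat.sub_add_cancel hqn]
    rw [h2]
    exact hstep.trans hmain
  refine ⟨hsum_t, ?_⟩
  have hnorm : ∀ i, ‖H i‖ ≤ t i := by
    intro i
    refine psd_norm_le (isLocalOn_psd (hlocal i) (hpsd i)) (htnn i) ?_
    have hloc2 := isLocalOn_smul_one_sub ((t i : ℝ) : ℂ) (hlocal i)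
    refine isLocalOn_psd hloc2 ?_
    have hps := smul_one_sub_psd (hpsd i)
    rwa [htr i] at hps
  calc ∑ i, ‖H i‖ ≤ ∑ i, t i := Finset.sum_le_sum (fun i _ => hnorm i)
    _ ≤ _ := hsum_t
end

section
/- Let m ≥ 1 and let A₁, …, A_m be PSD complex matrices of the same size with Σ_{i=1}^{m} ‖A_i‖ ≤ 1/8. Then there exist matrices Q₁, …, Q_m such that: (i) each Q_i is a nonnegative combination of at most two of the original terms, i.e. Q_i = c_i · A_{j(i)} + d_i · A_{k(i)} for some indices j(i), k(i) ∈ Fin m and reals c_i, d_i ≥ 0 (hence each Q_i is PSD); (ii) ‖Q_i‖ ≤ 1/m for every i; and (iii) Σ_{i=1}^{m} Q_i = Σ_{i=1}^{m} A_i. -/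
open Matrix
open scoped Matrix.Norms.L2Operator ComplexOrder


lemma sum_update_fin (m : ℕ) (f : Fin m → ℝ) (x : Fin m) (v : ℝ) :
    ∑ s, Function.update f x v s = (∑ s, f s) - f x + v := by
  rw [Finset.sum_update_of_mem (Finset.mem_univ x)]
  rw [Finset.sum_sdiff_eq_sub (by simp)]
  simp
  ring

lemma distribute (m : ℕ) (hm : 0 < m) (t : ℝ) (ht : 0 ≤ t) :
    ∀ (n : ℕ) (a : Fin m → ℝ), (∀ s, 0 ≤ a s) →
    (Finset.univ.filter (fun s => 0 < a s)).card ≤ n →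
    (∑ s, a s) ≤ n * t →
    ∃ (j k : Fin n → Fin m) (c d : Fin n → ℝ),
      (∀ i, 0 ≤ c i) ∧ (∀ i, 0 ≤ d i) ∧ (∀ i, c i + d i ≤ t) ∧
      (∀ s, (∑ i, ((if j i = s then c i else 0) + (if k i = s then d i else 0))) = a s) := by
  intro n
  induction n with
  | zero =>
    intro a ha hcard hsum
    refine ⟨Fin.elim0, Fin.elim0, Fin.elim0, Fin.elim0, (fun i => i.elim0), (fun i => i.elim0),
      (fun i => i.elim0), fun s => ?_⟩
    have : (Finset.univ.filter (fun s => 0 < a s)) = ∅ := by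
      exact Finset.card_eq_zero.mp (Nat.le_zero.mp hcard)
    have hs : a s = 0 := by
      by_contra h
      have hmem : s ∈ Finset.univ.filter (fun s => 0 < a s) := by
        simp [lt_of_le_of_ne (ha s) (Ne.symm h)]
      rw [this] at hmem
      simp at hmem
    simp [hs]
  | succ n IH =>
    intro a ha hcard hsum
    by_cases hall : ∀ s, a s = 0
    · refine ⟨fun _ => ⟨0, hm⟩, fun _ => ⟨0, hm⟩, 0, 0, by simp, by simp, by simp [ht],
        fun s => by simp [hall]⟩
    · push_neg at hall
      obtain ⟨s₁, hs₁⟩ := hall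
      have hs₁' : 0 < a s₁ := lt_of_le_of_ne (ha s₁) (Ne.symm hs₁)
      obtain ⟨L, -, hL⟩ := Finset.exists_max_image Finset.univ a ⟨s₁, Finset.mem_univ s₁⟩
      simp only [Finset.mem_univ, forall_true_left] at hL
      have hLpos : 0 < a L := lt_of_lt_of_le hs₁' (hL s₁)
      set P := Finset.univ.filter (fun s => 0 < a s) with hP
      have hLP : L ∈ P := by simp [hP, hLpos]
      have hPcard : 1 ≤ P.card := Finset.card_pos.mpr ⟨L, hLP⟩
      have key : ∀ (a' : Fin m → ℝ) (j₀ k₀ : Fin m) (c₀ d₀ : ℝ),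
          0 ≤ c₀ → 0 ≤ d₀ → c₀ + d₀ ≤ t →
          (∀ s, 0 ≤ a' s) →
          (Finset.univ.filter (fun s => 0 < a' s)).card ≤ n →
          (∑ s, a' s) ≤ n * t →
          (∀ s, ((if j₀ = s then c₀ else 0) + (if k₀ = s then d₀ else 0)) + a' s = a s) →
          ∃ (j k : Fin (n+1) → Fin m) (c d : Fin (n+1) → ℝ),
            (∀ i, 0 ≤ c i) ∧ (∀ i, 0 ≤ d i) ∧ (∀ i, c i + d i ≤ t) ∧
            (∀ s, (∑ i, ((if j i = s then c i else 0) + (if k i = s then d i else 0))) = a s) := by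
        intro a' j₀ k₀ c₀ d₀ hc₀ hd₀ hcd₀ ha' hcard' hsum' hstep
        obtain ⟨j, k, c, d, hc, hd, hcd, heq⟩ := IH a' ha' hcard' hsum'
        refine ⟨Fin.cons j₀ j, Fin.cons k₀ k, Fin.cons c₀ c, Fin.cons d₀ d, ?_, ?_, ?_, ?_⟩
        · intro i; refine Fin.cases ?_ ?_ i <;> simp [hc₀, hc]
        · intro i; refine Fin.cases ?_ ?_ i <;> simp [hd₀, hd]
        · intro i; refine Fin.cases ?_ ?_ i <;> simp [hcd₀, hcd]
        · intro s
          rw [Fin.sum_univ_succ]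
          simp only [Fin.cons_zero, Fin.cons_succ]
          rw [heq s]
          exact hstep s
      rcases le_or_gt (a L) t with hAL | hAL
      · -- Case A : whole max fits in one bucket
        refine key (Function.update a L 0) L L (a L) 0 (le_of_lt hLpos) le_rfl
          (by simpa using hAL) ?_ ?_ ?_ ?_
        · intro s
          rw [Function.update_apply]
          split <;> [rfl; exact ha s]
        · have hsub : Finset.univ.filter (fun s => 0 < Function.update a L 0 s) ⊆ P.erase L := by
            intro s hs
            simp only [Finset.mem_filter, Finset.mem_univ, true_and,
              Function.update_apply] at hs
            rcases eq_or_ne s L with rfl | h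
            · simp at hs
            · rw [if_neg h] at hs
              exact Finset.mem_erase.mpr ⟨h, by simp [hP, hs]⟩
          calc (Finset.univ.filter (fun s => 0 < Function.update a L 0 s)).card
              ≤ (P.erase L).card := Finset.card_le_card hsub
            _ = P.card - 1 := Finset.card_erase_of_mem hLP
            _ ≤ n := by omega
        · rw [sum_update_fin]
          have h1 : ∑ s, a s = ∑ s ∈ P, a s := by
            refine (Finset.sum_subset (Finset.filter_subset _ _) ?_).symm
            intro x _ hx
            simp [hP] at hx
            linarith [ha x, hx]
          have h2 : ∑ s ∈ P, a s ≤ P.card • a L :=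
            Finset.sum_le_card_nsmul P a (a L) (fun x _ => hL x)
          have h3 : (P.card : ℝ) ≤ (n+1 : ℕ) := by exact_mod_cast hcard
          simp only [nsmul_eq_mul] at h2
          have h4 : (P.card : ℝ) * a L ≤ ((n+1 : ℕ) : ℝ) * a L :=
            mul_le_mul_of_nonneg_right h3 (le_of_lt hLpos)
          have h5 : (n : ℝ) * a L ≤ (n : ℝ) * t :=
            mul_le_mul_of_nonneg_left hAL (by positivity)
          push_cast at h4 ⊢
          linarith
        · intro s
          rw [Function.update_apply]
          rcases eq_or_ne L s with rfl | h
          · simp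
          · simp [h, Ne.symm h]
      · -- Case B : max exceeds t
        obtain ⟨s₀, hs₀P, hs₀min⟩ := Finset.exists_min_image P a ⟨L, hLP⟩
        have hs₀pos : 0 < a s₀ := by
          have := hs₀P; rw [hP, Finset.mem_filter] at this; exact this.2
        rcases le_or_gt (a s₀) t with hB1 | hB2
        · -- B1 : min fits; pair min with a chunk of max
          have hne : s₀ ≠ L := by intro h; rw [h] at hB1; linarith
          set a' := Function.update (Function.update a s₀ 0) L (a L - (t - a s₀)) with ha'def
          have ha'apply : ∀ s, a' s = if s = L then a L - (t - a s₀)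
              else if s = s₀ then 0 else a s := by
            intro s
            rw [ha'def, Function.update_apply, Function.update_apply]
          refine key a' s₀ L (a s₀) (t - a s₀) (le_of_lt hs₀pos) (by linarith) (by linarith)
            ?_ ?_ ?_ ?_
          · intro s
            rw [ha'apply]
            split
            · linarith
            · split
              · exact le_refl 0
              · exact ha s
          · have hsub : Finset.univ.filter (fun s => 0 < a' s) ⊆ P.erase s₀ := by
              intro s hs
              simp only [Finset.mem_filter, Finset.mem_univ, true_and] at hs
              rw [ha'apply] at hs
              rcases eq_or_ne s L with rfl | h
              · exact Finset.mem_erase.mpr ⟨Ne.symm hne, hLP⟩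
              · rw [if_neg h] at hs
                rcases eq_or_ne s s₀ with rfl | h2
                · simp at hs
                · rw [if_neg h2] at hs
                  exact Finset.mem_erase.mpr ⟨h2, by simp [hP, hs]⟩
            calc (Finset.univ.filter (fun s => 0 < a' s)).card
                ≤ (P.erase s₀).card := Finset.card_le_card hsub
              _ = P.card - 1 := Finset.card_erase_of_mem hs₀P
              _ ≤ n := by omega
          · have hL' : Function.update a s₀ 0 L = a L := by
              rw [Function.update_apply, if_neg (Ne.symm hne)]
            rw [ha'def, sum_update_fin, hL', sum_update_fin]
            push_cast at hsum ⊢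
            linarith
          · intro s
            rw [ha'apply]
            rcases eq_or_ne s L with rfl | h
            · rw [if_pos rfl, if_neg hne, if_pos rfl]; ring
            · rw [if_neg h, if_neg (fun hh : L = s => h hh.symm)]
              rcases eq_or_ne s s₀ with rfl | h2
              · rw [if_pos rfl, if_pos rfl]; ring
              · rw [if_neg h2, if_neg (fun hh : s₀ = s => h2 hh.symm)]; ring
        · -- B2 : every positive term exceeds t; carve a chunk of size t from max
          have htpos : 0 < t := by
            by_contra h
            push_neg at h
            have ht0 : t = 0 := le_antisymm h ht
            rw [ht0] at hsum
            have h1 : ∑ s, a s = ∑ s ∈ P, a s := by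
              refine (Finset.sum_subset (Finset.filter_subset _ _) ?_).symm
              intro x _ hx
              simp [hP] at hx
              linarith [ha x, hx]
            have h2 : 0 < ∑ s ∈ P, a s :=
              Finset.sum_pos (fun s hs => by rw [hP, Finset.mem_filter] at hs; exact hs.2)
                ⟨L, hLP⟩
            simp at hsum
            linarith
          have hcardP : P.card ≤ n := by
            have h1 : ∑ s, a s = ∑ s ∈ P, a s := by
              refine (Finset.sum_subset (Finset.filter_subset _ _) ?_).symm
              intro x _ hx
              simp [hP] at hx
              linarith [ha x, hx]
            have h2 : P.card • a s₀ ≤ ∑ s ∈ P, a s :=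
              Finset.card_nsmul_le_sum P a (a s₀) (fun x hx => hs₀min x hx)
            simp only [nsmul_eq_mul] at h2
            by_contra hcon
            push_neg at hcon
            have h3 : ((n+1 : ℕ) : ℝ) ≤ (P.card : ℝ) := by exact_mod_cast hcon
            have h4 : ((n+1 : ℕ) : ℝ) * t < (P.card : ℝ) * a s₀ := by
              apply mul_lt_mul' h3 hB2 ht
              have : (0:ℝ) < ((n+1 : ℕ) : ℝ) := by positivity
              linarith
            push_cast at h4 hsum
            linarith
          set a' := Function.update a L (a L - t) with ha'def
          have ha'apply : ∀ s, a' s = if s = L then a L - t else a s := fun s => by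
            rw [ha'def, Function.update_apply]
          refine key a' L L t 0 ht le_rfl (by linarith) ?_ ?_ ?_ ?_
          · intro s
            rw [ha'apply]; split
            · linarith
            · exact ha s
          · have hsub : Finset.univ.filter (fun s => 0 < a' s) ⊆ P := by
              intro s hs
              simp only [Finset.mem_filter, Finset.mem_univ, true_and] at hs
              rw [ha'apply] at hs
              rcases eq_or_ne s L with rfl | h
              · exact hLP
              · rw [if_neg h] at hs
                simp [hP, hs]
            exact le_trans (Finset.card_le_card hsub) hcardP
          · rw [ha'def, sum_update_fin]
            push_cast at hsum ⊢
            linarith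
          · intro s
            rw [ha'apply]
            rcases eq_or_ne s L with rfl | h
            · simp
            · rw [if_neg h, if_neg (fun hh : L = s => h hh.symm)]; simp

/-- **Redistribution of PSD terms (core of the Hamiltonian local smoothing lemma).**
If `A₁, …, A_m` are PSD with `∑ ‖A_i‖ ≤ 1/8`, then there are terms `Q_i`, each a
nonnegative combination of at most two of the `A`'s, with `‖Q_i‖ ≤ 1/m` and
`∑ Q_i = ∑ A_i`. -/
theorem psd_redistribution
    (N m : ℕ) (hm : 1 ≤ m)
    (A : Fin m → Matrix (Fin N) (Fin N) ℂ)
    (hpsd : ∀ i, (A i).PosSemidef)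
    (hsum : ∑ i, ‖A i‖ ≤ 1 / 8) :
    ∃ (Q : Fin m → Matrix (Fin N) (Fin N) ℂ)
      (j k : Fin m → Fin m) (c d : Fin m → ℝ),
      (∀ i, 0 ≤ c i) ∧ (∀ i, 0 ≤ d i) ∧
      (∀ i, Q i = c i • A (j i) + d i • A (k i)) ∧
      (∀ i, ‖Q i‖ ≤ 1 / m) ∧
      (∑ i, Q i = ∑ i, A i) := by
  have hm' : 0 < m := hm
  have hmR : (0:ℝ) < m := by exact_mod_cast hm'
  have ht : (0:ℝ) ≤ 1 / m := by positivity
  obtain ⟨j, k, c, d, hc, hd, hcd, heq⟩ :=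
    distribute m hm' (1 / m) ht m (fun s => ‖A s‖) (fun s => norm_nonneg _)
      (le_trans (Finset.card_filter_le _ _) (by simp))
      (by
        rw [mul_one_div, div_self (ne_of_gt hmR)]
        linarith)
  set c' : Fin m → ℝ := fun i => c i / ‖A (j i)‖ with hc'def
  set d' : Fin m → ℝ := fun i => d i / ‖A (k i)‖ with hd'def
  set Q : Fin m → Matrix (Fin N) (Fin N) ℂ :=
    fun i => c' i • A (j i) + d' i • A (k i) with hQdef
  have hc' : ∀ i, 0 ≤ c' i := fun i => div_nonneg (hc i) (norm_nonneg _)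
  have hd' : ∀ i, 0 ≤ d' i := fun i => div_nonneg (hd i) (norm_nonneg _)
  have hcmul : ∀ i, c' i * ‖A (j i)‖ ≤ c i := by
    intro i
    rcases eq_or_ne ‖A (j i)‖ 0 with h | h
    · rw [h, mul_zero]; exact hc i
    · rw [hc'def]; simp only; rw [div_mul_cancel₀ _ h]
  have hdmul : ∀ i, d' i * ‖A (k i)‖ ≤ d i := by
    intro i
    rcases eq_or_ne ‖A (k i)‖ 0 with h | h
    · rw [h, mul_zero]; exact hd i
    · rw [hd'def]; simp only; rw [div_mul_cancel₀ _ h]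
  refine ⟨Q, j, k, c', d', hc', hd', fun i => rfl, ?_, ?_⟩
  · intro i
    calc ‖Q i‖ ≤ ‖c' i • A (j i)‖ + ‖d' i • A (k i)‖ := norm_add_le _ _
      _ = c' i * ‖A (j i)‖ + d' i * ‖A (k i)‖ := by
          rw [norm_smul, norm_smul, Real.norm_of_nonneg (hc' i), Real.norm_of_nonneg (hd' i)]
      _ ≤ c i + d i := add_le_add (hcmul i) (hdmul i)
      _ ≤ 1 / m := hcd i
  · calc ∑ i, Q i
        = ∑ i, ∑ s, ((if j i = s then c' i else 0) + (if k i = s then d' i else 0)) • A s := by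
          refine Finset.sum_congr rfl fun i _ => ?_
          simp only [add_smul, Finset.sum_add_distrib, ite_smul, zero_smul,
            Finset.sum_ite_eq, Finset.mem_univ, if_true]
          rfl
      _ = ∑ s, (∑ i, ((if j i = s then c' i else 0) + (if k i = s then d' i else 0))) • A s := by
          rw [Finset.sum_comm]
          exact Finset.sum_congr rfl fun s _ => (Finset.sum_smul).symm
      _ = ∑ s, A s := by
          refine Finset.sum_congr rfl fun s _ => ?_
          rcases eq_or_ne ‖A s‖ 0 with h | h
          · rw [norm_eq_zero.mp h]
            simp
          · have hw : ∑ i, ((if j i = s then c' i else 0) + (if k i = s then d' i else 0))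
                = (∑ i, ((if j i = s then c i else 0) + (if k i = s then d i else 0))) / ‖A s‖ := by
              rw [Finset.sum_div]
              refine Finset.sum_congr rfl fun i _ => ?_
              rw [add_div]
              congr 1
              · rcases eq_or_ne (j i) s with rfl | hji
                · simp [hc'def]
                · simp [hji]
              · rcases eq_or_ne (k i) s with rfl | hki
                · simp [hd'def]
                · simp [hki]
            rw [hw, heq s, div_self h, one_smul]
end

section
/- Let m ≥ 1 be a natural number and 0 < ε ≤ 1. Let p : Fin m → ℝ satisfy 0 ≤ p_i ≤ 1 for all i and Σ_i p_i = 1, and let H_i be complex matrices of a common size with ‖H_i‖ ≤ 1 for all i. Let p̃ : Fin m → ℝ satisfy p̃_i ≥ 0 and |p̃_i − p_i| ≤ ε/(8m²) for all i, and let H̃_i be PSD matrices with ‖H_i − H̃_i‖ ≤ ε/6 for all i. Set W̃ = Σ_i p̃_i, p̂_i = p̃_i / W̃, and Ĥ_i = H̃_i / max(‖H̃_i‖, 1). Then ‖Σ_{i ∈ Fin m} p̂_i • Ĥ_i − Σ_{i ∈ Fin m} p_i • H_i‖ ≤ ε. -/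
open Matrix
open scoped Matrix.Norms.L2Operator ComplexOrder

/-- **Perturbation bound for learning weighted Hamiltonians.**
If each weight `p̃_i` is within `ε/(8m²)` of the true probability weight `p_i`, and each
PSD term `H̃_i` is within `ε/6` of `H_i` (with `‖H_i‖ ≤ 1`), then after renormalizing the
weights (`p̂_i = p̃_i / ∑ p̃_j`) and rescaling each term (`Ĥ_i = H̃_i / max(‖H̃_i‖, 1)`),
the resulting Hamiltonian differs from `∑ p_i H_i` by at most `ε` in operator norm. -/
theorem weighted_hamiltonian_perturbation
    (N m : ℕ) (hm : 1 ≤ m) (ε : ℝ) (hε0 : 0 < ε) (hε1 : ε ≤ 1)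
    (p ptil : Fin m → ℝ)
    (H Htil : Fin m → Matrix (Fin N) (Fin N) ℂ)
    (hp0 : ∀ i, 0 ≤ p i) (hp1 : ∀ i, p i ≤ 1) (hpsum : ∑ i, p i = 1)
    (hHnorm : ∀ i, ‖H i‖ ≤ 1)
    (hptil0 : ∀ i, 0 ≤ ptil i)
    (hptilerr : ∀ i, |ptil i - p i| ≤ ε / (8 * (m : ℝ) ^ 2))
    (hHtilpsd : ∀ i, (Htil i).PosSemidef)
    (hHtilerr : ∀ i, ‖H i - Htil i‖ ≤ ε / 6) :
    ‖(∑ i, (ptil i / ∑ j, ptil j) • (max ‖Htil i‖ 1)⁻¹ • Htil i) -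
        ∑ i, p i • H i‖ ≤ ε := by
  have hm1 : (1 : ℝ) ≤ (m : ℝ) := by exact_mod_cast hm
  have hmpos : (0 : ℝ) < (m : ℝ) := by linarith
  set W : ℝ := ∑ j, ptil j with hWdef
  set δ : ℝ := ε / (8 * (m : ℝ) ^ 2) with hδdef
  have hδ0 : 0 ≤ δ := by positivity
  -- bound on |W - 1|
  have hW1 : |W - 1| ≤ ε / (8 * m) := by
    have h1 : W - 1 = ∑ i, (ptil i - p i) := by
      rw [Finset.sum_sub_distrib, hpsum, hWdef]
    rw [h1]
    calc |∑ i, (ptil i - p i)| ≤ ∑ i, |ptil i - p i| :=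
          Finset.abs_sum_le_sum_abs _ _
      _ ≤ ∑ _i : Fin m, δ := Finset.sum_le_sum fun i _ => hptilerr i
      _ = (m : ℝ) * δ := by simp [mul_comm]
      _ = ε / (8 * m) := by rw [hδdef]; field_simp
  have hεm : ε / (8 * m) ≤ 1 / 8 := by
    rw [div_le_div_iff₀ (by positivity) (by norm_num)]
    nlinarith
  have hWlb : (7 : ℝ) / 8 ≤ W := by
    have := abs_le.mp hW1
    linarith
  have hWpos : (0 : ℝ) < W := by linarith
  -- per-term bounds
  have key : ∀ i, ‖(ptil i / W) • (max ‖Htil i‖ 1)⁻¹ • Htil i - p i • H i‖ ≤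
      |ptil i / W - p i| + p i * (ε / 3) := by
    intro i
    set c : ℝ := max ‖Htil i‖ 1 with hcdef
    have hc1 : (1 : ℝ) ≤ c := le_max_right _ _
    have hcpos : (0 : ℝ) < c := by linarith
    have hcn : ‖Htil i‖ ≤ c := le_max_left _ _
    set G : Matrix (Fin N) (Fin N) ℂ := c⁻¹ • Htil i with hGdef
    have hGnorm : ‖G‖ ≤ 1 := by
      rw [hGdef, norm_smul, Real.norm_eq_abs, abs_of_pos (by positivity)]
      rw [inv_mul_le_iff₀ hcpos]
      simpa using hcn
    have hHtn : ‖Htil i‖ ≤ 1 + ε / 6 := by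
      calc ‖Htil i‖ = ‖H i - (H i - Htil i)‖ := by rw [sub_sub_cancel]
        _ ≤ ‖H i‖ + ‖H i - Htil i‖ := norm_sub_le _ _
        _ ≤ 1 + ε / 6 := add_le_add (hHnorm i) (hHtilerr i)
    have hcub : c ≤ 1 + ε / 6 := by
      rw [hcdef]
      exact max_le hHtn (by linarith)
    have hGH : ‖G - H i‖ ≤ ε / 3 := by
      have h1 : ‖G - Htil i‖ ≤ ε / 6 := by
        have : G - Htil i = (c⁻¹ - 1) • Htil i := by
          rw [hGdef, sub_smul, one_smul]
        rw [this, norm_smul, Real.norm_eq_abs]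
        have habs : |c⁻¹ - 1| = 1 - c⁻¹ := by
          rw [abs_of_nonpos (by simp [inv_le_one_iff₀]; right; linarith)]
          ring
        rw [habs]
        have h2 : (1 - c⁻¹) * ‖Htil i‖ ≤ (1 - c⁻¹) * c := by
          apply mul_le_mul_of_nonneg_left hcn
          simp [inv_le_one_iff₀]; right; linarith
        calc (1 - c⁻¹) * ‖Htil i‖ ≤ (1 - c⁻¹) * c := h2
          _ = c - 1 := by field_simp
          _ ≤ ε / 6 := by linarith
      calc ‖G - H i‖ = ‖(G - Htil i) + (Htil i - H i)‖ := by congr 1; abel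
        _ ≤ ‖G - Htil i‖ + ‖Htil i - H i‖ := norm_add_le _ _
        _ ≤ ε / 6 + ε / 6 := by
            refine add_le_add h1 ?_
            rw [← norm_neg]; simpa using hHtilerr i
        _ = ε / 3 := by ring
    clear_value G
    calc ‖(ptil i / W) • G - p i • H i‖
        = ‖(ptil i / W - p i) • G + p i • (G - H i)‖ := by
          congr 1
          rw [sub_smul, smul_sub]
          abel
      _ ≤ ‖(ptil i / W - p i) • G‖ + ‖p i • (G - H i)‖ := norm_add_le _ _
      _ = |ptil i / W - p i| * ‖G‖ + |p i| * ‖G - H i‖ := by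
          rw [norm_smul, norm_smul, Real.norm_eq_abs, Real.norm_eq_abs]
      _ ≤ |ptil i / W - p i| * 1 + p i * (ε / 3) := by
          refine add_le_add ?_ ?_
          · exact mul_le_mul_of_nonneg_left hGnorm (abs_nonneg _)
          · rw [abs_of_nonneg (hp0 i)]
            exact mul_le_mul_of_nonneg_left hGH (hp0 i)
      _ = |ptil i / W - p i| + p i * (ε / 3) := by ring
  -- sum of weight errors
  have hqsum : ∑ i, |ptil i / W - p i| ≤ ε / 4 := by
    have hterm : ∀ i, |ptil i / W - p i| ≤ ptil i * (|1 - W| / W) + δ := by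
      intro i
      calc |ptil i / W - p i|
          = |(ptil i / W - ptil i) + (ptil i - p i)| := by congr 1; ring
        _ ≤ |ptil i / W - ptil i| + |ptil i - p i| := abs_add_le _ _
        _ ≤ ptil i * (|1 - W| / W) + δ := by
            refine add_le_add (le_of_eq ?_) (hptilerr i)
            have h3 : ptil i / W - ptil i = ptil i * ((1 - W) / W) := by
              field_simp
            rw [h3, abs_mul, abs_of_nonneg (hptil0 i), abs_div,
              abs_of_pos hWpos]
    calc ∑ i, |ptil i / W - p i|
        ≤ ∑ i, (ptil i * (|1 - W| / W) + δ) := Finset.sum_le_sum fun i _ => hterm i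
      _ = W * (|1 - W| / W) + (m : ℝ) * δ := by
          rw [Finset.sum_add_distrib, ← Finset.sum_mul, ← hWdef]
          simp [mul_comm]
      _ = |1 - W| + ε / (8 * m) := by
          rw [mul_div_cancel₀ _ (ne_of_gt hWpos)]
          congr 1
          rw [hδdef]; field_simp
      _ ≤ ε / (8 * m) + ε / (8 * m) := by
          refine add_le_add ?_ le_rfl
          rw [abs_sub_comm]; exact hW1
      _ ≤ ε / 8 + ε / 8 := by
          have : ε / (8 * m) ≤ ε / 8 := by
            apply div_le_div_of_nonneg_left (le_of_lt hε0) (by norm_num)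
            nlinarith
          linarith
      _ = ε / 4 := by ring
  -- combine
  calc ‖(∑ i, (ptil i / W) • (max ‖Htil i‖ 1)⁻¹ • Htil i) - ∑ i, p i • H i‖
      = ‖∑ i, ((ptil i / W) • (max ‖Htil i‖ 1)⁻¹ • Htil i - p i • H i)‖ := by
        rw [Finset.sum_sub_distrib]
    _ ≤ ∑ i, ‖(ptil i / W) • (max ‖Htil i‖ 1)⁻¹ • Htil i - p i • H i‖ :=
        norm_sum_le _ _
    _ ≤ ∑ i, (|ptil i / W - p i| + p i * (ε / 3)) :=
        Finset.sum_le_sum fun i _ => key i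
    _ = (∑ i, |ptil i / W - p i|) + (∑ i, p i) * (ε / 3) := by
        rw [Finset.sum_add_distrib, ← Finset.sum_mul]
    _ ≤ ε / 4 + 1 * (ε / 3) := by
        rw [hpsum]
        exact add_le_add hqsum le_rfl
    _ ≤ ε := by linarith
end

section
/- Let d be a natural number and let M be a d×d complex Hermitian matrix with 0 ≼ M ≼ I. Then there exists a complex matrix T with rows indexed by (Fin d × Fin 2) and columns indexed by Fin d such that Tᴴ · T = I (T is an isometry) and Tᴴ · (I_d ⊗ₖ P₁) · T = I − M, where P₁ is the 2×2 matrix diag(0,1). Consequently, for every vector ψ ∈ ℂ^{d}, the squared norm ‖(I_d ⊗ₖ P₁) · T · ψ‖² equals ψᴴ(I − M)ψ; in particular, for a unit vector ψ this probability equals 1 − ψᴴMψ. -/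
open Matrix
open scoped Kronecker ComplexOrder

section kitaevSqrt
open scoped MatrixOrder

noncomputable def Matrix.PosSemidef.sqrt {n : Type*} [Fintype n] [DecidableEq n]
    {A : Matrix n n ℂ} (_hA : A.PosSemidef) : Matrix n n ℂ := CFC.sqrt A

lemma Matrix.PosSemidef.posSemidef_sqrt {n : Type*} [Fintype n] [DecidableEq n]
    {A : Matrix n n ℂ} (hA : A.PosSemidef) : hA.sqrt.PosSemidef :=
  (CFC.sqrt_nonneg A).posSemidef

lemma Matrix.PosSemidef.sqrt_mul_self {n : Type*} [Fintype n] [DecidableEq n]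
    {A : Matrix n n ℂ} (hA : A.PosSemidef) : hA.sqrt * hA.sqrt = A :=
  CFC.sqrt_mul_sqrt_self A hA.nonneg

end kitaevSqrt

lemma kitaev_aux_dot {n m : Type*} [Fintype n] [Fintype m]
    (N : Matrix m n ℂ) (ψ : n → ℂ) :
    star (N *ᵥ ψ) ⬝ᵥ (N *ᵥ ψ) = star ψ ⬝ᵥ ((Nᴴ * N) *ᵥ ψ) := by
  rw [star_mulVec, dotProduct_mulVec, vecMul_vecMul, ← dotProduct_mulVec]

/-- **Core of Kitaev's energy estimation protocol.**
For Hermitian `M` with `0 ≼ M ≼ I`, there is an isometry `T : ℂ^d → ℂ^d ⊗ ℂ²`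
(`Tᴴ T = I`) such that `Tᴴ (I ⊗ P₁) T = I − M`, where `P₁ = diag(0,1)`.
Consequently, for every `ψ`, the squared norm of `(I ⊗ P₁) T ψ` equals
`ψᴴ (I − M) ψ`; for unit `ψ` this is `1 − ψᴴ M ψ`. -/
theorem kitaev_energy_measurement
    (d : ℕ) (M : Matrix (Fin d) (Fin d) ℂ)
    (hM : M.PosSemidef)
    (hM1 : ((1 : Matrix (Fin d) (Fin d) ℂ) - M).PosSemidef)
    (P₁ : Matrix (Fin 2) (Fin 2) ℂ) (hP₁ : P₁ = Matrix.diagonal ![0, 1]) :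
    ∃ T : Matrix (Fin d × Fin 2) (Fin d) ℂ,
      Tᴴ * T = 1 ∧
      Tᴴ * ((1 : Matrix (Fin d) (Fin d) ℂ) ⊗ₖ P₁) * T = 1 - M ∧
      ∀ ψ : Fin d → ℂ,
        star ((((1 : Matrix (Fin d) (Fin d) ℂ) ⊗ₖ P₁) * T) *ᵥ ψ) ⬝ᵥ
            ((((1 : Matrix (Fin d) (Fin d) ℂ) ⊗ₖ P₁) * T) *ᵥ ψ) =
          star ψ ⬝ᵥ (((1 : Matrix (Fin d) (Fin d) ℂ) - M) *ᵥ ψ) := by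
  set A := hM.sqrt with hAdef
  set B := hM1.sqrt with hBdef
  have hAH : Aᴴ = A := hM.posSemidef_sqrt.isHermitian
  have hBH : Bᴴ = B := hM1.posSemidef_sqrt.isHermitian
  have hAA : A * A = M := hM.sqrt_mul_self
  have hBB : B * B = 1 - M := hM1.sqrt_mul_self
  have hA' : ∀ i j, star (A i j) = A j i := by
    intro i j
    have := congrFun (congrFun hAH j) i
    simpa [conjTranspose_apply] using this
  have hB' : ∀ i j, star (B i j) = B j i := by
    intro i j
    have := congrFun (congrFun hBH j) i
    simpa [conjTranspose_apply] using this
  set T : Matrix (Fin d × Fin 2) (Fin d) ℂ :=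
    Matrix.of fun p j => if p.2 = 0 then A p.1 j else B p.1 j with hT
  set T₁ : Matrix (Fin d × Fin 2) (Fin d) ℂ :=
    Matrix.of fun p j => if p.2 = 0 then 0 else B p.1 j with hT₁
  have h1 : ((1 : Matrix (Fin d) (Fin d) ℂ) ⊗ₖ P₁) * T = T₁ := by
    ext ⟨i, k⟩ j
    simp only [mul_apply, kroneckerMap_apply, hP₁, hT, hT₁, of_apply,
      Fintype.sum_prod_type_right, Fin.sum_univ_two]
    fin_cases k <;>
      simp [Matrix.one_apply, Matrix.diagonal_apply, ite_mul, mul_ite,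
        Finset.sum_ite_eq, Finset.sum_ite_eq']
  have h2 : Tᴴ * T₁ = 1 - M := by
    ext a b
    rw [← hBB]
    simp only [mul_apply, conjTranspose_apply, hT, hT₁, of_apply,
      Fintype.sum_prod_type_right, Fin.sum_univ_two]
    simp [hB']
  have h3 : T₁ᴴ * T₁ = 1 - M := by
    ext a b
    rw [← hBB]
    simp only [mul_apply, conjTranspose_apply, hT₁, of_apply,
      Fintype.sum_prod_type_right, Fin.sum_univ_two]
    simp [hB']
  refine ⟨T, ?_, ?_, ?_⟩
  · ext a b
    have hone : (1 : Matrix (Fin d) (Fin d) ℂ) = M + (1 - M) := by abel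
    rw [hone, ← hBB, ← hAA]
    simp only [mul_apply, conjTranspose_apply, hT, Matrix.add_apply, of_apply,
      Fintype.sum_prod_type_right, Fin.sum_univ_two]
    simp [hA', hB']
  · rw [Matrix.mul_assoc, h1, h2]
  · intro ψ
    rw [h1, kitaev_aux_dot, h3]
end
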